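/- For all integers a, b, c, d, e, m: (F(d−a)·L(e−b) − F(e−a)·L(d−b))·F(m−c) = (F(d−c)·L(e−b) − F(e−c)·L(d−b))·F(m−a) + (F(d−a)·F(e−c) − F(e−a)·F(d−c))·L(m−b). -/

import Mathlib

/-- Any solution of the Fibonacci recurrence is a combination of `F (x-1)` and `F x`. -/
lemma fib_decomp (F G : ℤ → ℤ)
    (hF0 : F 0 = 0) (hF1 : F 1 = 1)
    (hF : ∀ n : ℤ, F n = F (n - 1) + F (n - 2))
    (hG : ∀ n : ℤ, G n = G (n - 1) + G (n - 2)) :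
    ∀ x : ℤ, G x = G 0 * F (x - 1) + G 1 * F x := by
  have hFm1 : F (-1) = 1 := by
    have h := hF 1
    rw [show (1:ℤ) - 1 = 0 by ring, show (1:ℤ) - 2 = -1 by ring, hF0, hF1] at h
    linarith
  have key : ∀ n : ℤ, (G n = G 0 * F (n - 1) + G 1 * F n) ∧
      (G (n + 1) = G 0 * F n + G 1 * F (n + 1)) := by
    intro n
    induction n using Int.induction_on with
    | zero =>
      refine ⟨?_, ?_⟩
      · rw [show (0:ℤ) - 1 = -1 by ring, hFm1, hF0]; ring
      · rw [show (0:ℤ) + 1 = 1 by ring, hF0, hF1]; ring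
    | succ k ih =>
      obtain ⟨h1, h2⟩ := ih
      have hFk1 : F ((k:ℤ) + 1) = F k + F (k - 1) := by
        have h := hF ((k:ℤ) + 1)
        rw [show (k:ℤ) + 1 - 1 = k by ring, show (k:ℤ) + 1 - 2 = k - 1 by ring] at h
        exact h
      have hFk2 : F ((k:ℤ) + 2) = F (k + 1) + F k := by
        have h := hF ((k:ℤ) + 2)
        rw [show (k:ℤ) + 2 - 1 = k + 1 by ring, show (k:ℤ) + 2 - 2 = k by ring] at h
        exact h
      have hGk2 : G ((k:ℤ) + 2) = G (k + 1) + G k := by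
        have h := hG ((k:ℤ) + 2)
        rw [show (k:ℤ) + 2 - 1 = k + 1 by ring, show (k:ℤ) + 2 - 2 = k by ring] at h
        exact h
      refine ⟨?_, ?_⟩
      · rw [show (k:ℤ) + 1 - 1 = k by ring]; exact h2
      · rw [show (k:ℤ) + 1 + 1 = k + 2 by ring]
        linear_combination h1 + h2 + hGk2 - G 0 * hFk1 - G 1 * hFk2
    | pred k ih =>
      obtain ⟨h1, h2⟩ := ih
      have hG1 : G (-(k:ℤ) + 1) = G (-k) + G (-k - 1) := by
        have h := hG (-(k:ℤ) + 1)
        rw [show -(k:ℤ) + 1 - 1 = -k by ring, show -(k:ℤ) + 1 - 2 = -k - 1 by ring] at h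
        exact h
      have hFk1 : F (-(k:ℤ) + 1) = F (-k) + F (-k - 1) := by
        have h := hF (-(k:ℤ) + 1)
        rw [show -(k:ℤ) + 1 - 1 = -k by ring, show -(k:ℤ) + 1 - 2 = -k - 1 by ring] at h
        exact h
      have hFk2 : F (-(k:ℤ)) = F (-k - 1) + F (-k - 2) := by
        have h := hF (-(k:ℤ))
        rw [show -(k:ℤ) - 1 = -k - 1 by ring, show -(k:ℤ) - 2 = -k - 2 by ring] at h
        exact h
      refine ⟨?_, ?_⟩
      · rw [show -(k:ℤ) - 1 - 1 = -k - 2 by ring]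
        linear_combination h2 - h1 - hG1 + G 1 * hFk1 + G 0 * hFk2
      · rw [show -(k:ℤ) - 1 + 1 = -k by ring]
        have h1' := h1
        rw [show -(k:ℤ) - 1 = -k - 1 by ring] at h1' ⊢
        exact h1'
  intro x
  exact (key x).1

/-- Identity for Fibonacci and Lucas numbers extended to all integers. -/
theorem stmt_4 (F L : ℤ → ℤ)
    (hF0 : F 0 = 0) (hF1 : F 1 = 1)
    (hF : ∀ n : ℤ, F n = F (n - 1) + F (n - 2))
    (hL0 : L 0 = 2) (hL1 : L 1 = 1)
    (hL : ∀ n : ℤ, L n = L (n - 1) + L (n - 2))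
    (a b c d e m : ℤ) :
    (F (d - a) * L (e - b) - F (e - a) * L (d - b)) * F (m - c)
      = (F (d - c) * L (e - b) - F (e - c) * L (d - b)) * F (m - a)
        + (F (d - a) * F (e - c) - F (e - a) * F (d - c)) * L (m - b) := by
  have dF : ∀ t x : ℤ, F (x - t) = F (0 - t) * F (x - 1) + F (1 - t) * F x := by
    intro t x
    have := fib_decomp F (fun n => F (n - t)) hF0 hF1 hF
      (fun n => by
        have h := hF (n - t)
        rw [show n - t - 1 = n - 1 - t by ring, show n - t - 2 = n - 2 - t by ring] at h
        exact h) x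
    simpa using this
  have dL : ∀ t x : ℤ, L (x - t) = L (0 - t) * F (x - 1) + L (1 - t) * F x := by
    intro t x
    have := fib_decomp F (fun n => L (n - t)) hF0 hF1 hF
      (fun n => by
        have h := hL (n - t)
        rw [show n - t - 1 = n - 1 - t by ring, show n - t - 2 = n - 2 - t by ring] at h
        exact h) x
    simpa using this
  rw [dF a d, dF a e, dF a m, dF c d, dF c e, dF c m, dL b d, dL b e, dL b m]
  ring
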